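/- arXiv:1512.06958 — 4 statements merged into one kernel-verified Lean document; each statement's English description precedes it below -/
import Mathlib

section
/- Let Δ be a flag simplicial complex of dimension d-1, and let σ_1 and σ_2 be two (d-2)-dimensional faces (ridges) that both lie in the same facet σ of Δ. Then the links lk_Δ σ_1 and lk_Δ σ_2 have no common vertex. -/
open Finset

/-- An abstract simplicial complex on vertex type `V`, given by a finite,
downward-closed family of finite faces containing the empty face. -/
structure SC (V : Type*) [DecidableEq V] where
  faces : Finset (Finset V)
  empty_mem : ∅ ∈ faces
  down_closed : ∀ ⦃σ τ : Finset V⦄, σ ∈ faces → τ ⊆ σ → τ ∈ faces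

namespace SC

variable {V : Type*} [DecidableEq V]

/-- The vertex set of a complex. -/
def vertexSet (Δ : SC V) : Finset V := Δ.faces.sup id

/-- `fNum Δ i` is the number of `i`-dimensional faces (faces of cardinality `i+1`). -/
def fNum (Δ : SC V) (i : ℕ) : ℕ := (Δ.faces.filter fun σ => σ.card = i + 1).card

/-- A complex is flag if it is the clique complex of its graph, i.e. every set of
vertices which is pairwise joined by edges is a face (equivalently, all minimal
non-faces have cardinality two). -/
def IsFlag (Δ : SC V) : Prop :=
  ∀ σ : Finset V, (∀ u ∈ σ, ∀ v ∈ σ, ({u, v} : Finset V) ∈ Δ.faces) → σ ∈ Δ.faces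

/-- The restriction `Δ[W]` of `Δ` to a set `W` of vertices. -/
def restrict (Δ : SC V) (W : Finset V) : SC V where
  faces := Δ.faces.filter fun σ => σ ⊆ W
  empty_mem := by simp [Δ.empty_mem]
  down_closed := by
    intro σ τ hσ hτ
    simp only [mem_filter] at hσ ⊢
    exact ⟨Δ.down_closed hσ.1 hτ, hτ.trans hσ.2⟩

/-- The link of a face `σ` in `Δ`. -/
def link (Δ : SC V) (σ : Finset V) : SC V where
  faces := insert ∅ (Δ.faces.filter fun τ => Disjoint τ σ ∧ τ ∪ σ ∈ Δ.faces)
  empty_mem := mem_insert_self _ _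
  down_closed := by
    intro τ ρ hτ hρ
    rcases mem_insert.1 hτ with h | h
    · subst h
      simp [Finset.subset_empty.1 hρ]
    · simp only [mem_filter] at h
      refine mem_insert.2 (Or.inr ?_)
      simp only [mem_filter]
      exact ⟨Δ.down_closed h.1 hρ, h.2.1.mono_left hρ,
        Δ.down_closed h.2.2 (Finset.union_subset_union hρ Finset.Subset.rfl)⟩

/-- A facet is a maximal face. -/
def IsFacet (Δ : SC V) (σ : Finset V) : Prop :=
  σ ∈ Δ.faces ∧ ∀ τ ∈ Δ.faces, σ ⊆ τ → σ = τ

/-- `Δ` is pure of dimension `D`: all faces have dimension at most `D` and all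
facets have dimension exactly `D`. -/
def Pure (Δ : SC V) (D : ℕ) : Prop :=
  (∀ σ ∈ Δ.faces, σ.card ≤ D + 1) ∧ (∃ σ ∈ Δ.faces, σ.card = D + 1) ∧
    ∀ σ : Finset V, Δ.IsFacet σ → σ.card = D + 1

/-- The graph (1-skeleton) of a complex. -/
def graph (Δ : SC V) : SimpleGraph V where
  Adj u v := u ≠ v ∧ ({u, v} : Finset V) ∈ Δ.faces
  symm := by
    constructor
    intro u v h
    exact ⟨h.1.symm, by rw [Finset.pair_comm]; exact h.2⟩
  loopless := by constructor; intro u h; exact h.1 rfl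

/-- A complex is connected if its vertex set is nonempty and any two vertices are
joined by a path in its graph. -/
def Connected (Δ : SC V) : Prop :=
  Δ.vertexSet.Nonempty ∧ ∀ u ∈ Δ.vertexSet, ∀ v ∈ Δ.vertexSet, Δ.graph.Reachable u v

/-- The reduced Euler characteristic `χ̃(Δ) = -1 + f₀ - f₁ + f₂ - ⋯`. -/
def redChar (Δ : SC V) : ℤ := -∑ σ ∈ Δ.faces, (-1 : ℤ) ^ σ.card

/-- `Δ` is an Eulerian complex of dimension `D`: it is pure of dimension `D` and the
reduced Euler characteristic of the link of every face `σ` (including `σ = ∅`)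
equals `(-1) ^ (dim lk σ)`, written multiplicatively to avoid signed dimensions. -/
def IsEulerian (Δ : SC V) (D : ℕ) : Prop :=
  Δ.Pure D ∧ ∀ σ ∈ Δ.faces, (Δ.link σ).redChar * (-1) ^ σ.card = (-1) ^ D

/-- A weak pseudomanifold of dimension `D`: pure and every ridge ((D-1)-face) lies
in exactly two facets. -/
def IsWeakPseudo (Δ : SC V) (D : ℕ) : Prop :=
  Δ.Pure D ∧ ∀ σ ∈ Δ.faces, σ.card = D →
    (Δ.faces.filter fun τ => σ ⊆ τ ∧ τ.card = D + 1).card = 2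

/-- A normal pseudomanifold of dimension `D`: a connected weak pseudomanifold all of
whose links of faces of dimension `≤ D - 2` are connected. -/
def IsNormalPseudo (Δ : SC V) (D : ℕ) : Prop :=
  Δ.IsWeakPseudo D ∧ Δ.Connected ∧
    ∀ σ ∈ Δ.faces, σ.card + 1 ≤ D → (Δ.link σ).Connected

/-- The join of two complexes (on disjoint vertex sets). -/
def join (Δ Γ : SC V) : SC V where
  faces := (Δ.faces ×ˢ Γ.faces).image fun p => p.1 ∪ p.2
  empty_mem := Finset.mem_image.2 ⟨(∅, ∅),
    Finset.mem_product.2 ⟨Δ.empty_mem, Γ.empty_mem⟩, Finset.union_empty ∅⟩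
  down_closed := by
    intro σ τ hσ hτ
    rw [Finset.mem_image] at hσ ⊢
    obtain ⟨⟨a, b⟩, hab, rfl⟩ := hσ
    rw [Finset.mem_product] at hab
    refine ⟨(τ ∩ a, τ ∩ b), Finset.mem_product.2
      ⟨Δ.down_closed hab.1 Finset.inter_subset_right,
       Γ.down_closed hab.2 Finset.inter_subset_right⟩, ?_⟩
    rw [← Finset.inter_union_distrib_left]
    exact Finset.inter_eq_left.2 hτ

/-- The trivial complex, whose only face is the empty face (identity for join). -/
def trivialSC : SC V where
  faces := {∅}
  empty_mem := Finset.mem_singleton_self ∅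
  down_closed := by
    intro σ τ hσ hτ
    simp only [Finset.mem_singleton] at hσ ⊢
    subst hσ
    exact Finset.subset_empty.1 hτ

/-- The join of a finite family of complexes. -/
def bigJoin : {k : ℕ} → (Fin k → SC V) → SC V
  | 0, _ => trivialSC
  | _ + 1, C => (C 0).join (bigJoin fun i => C i.succ)

/-- `Δ` is a cycle (circle) with `n` vertices: a connected, 1-dimensional complex
all of whose vertices have exactly two neighbours. -/
def IsCycle (Δ : SC V) (n : ℕ) : Prop :=
  Δ.vertexSet.card = n ∧ (∀ σ ∈ Δ.faces, σ.card ≤ 2) ∧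
    (∀ v ∈ Δ.vertexSet, (Δ.link {v}).vertexSet.card = 2) ∧ Δ.Connected

/-- `Δ` is the boundary complex of the `d`-dimensional cross-polytope: its vertices
come in `d` antipodal pairs and the faces are exactly the sets containing at most
one vertex of each pair. -/
def IsCrossPolytopeBoundary (Δ : SC V) (d : ℕ) : Prop :=
  ∃ x y : Fin d → V, Function.Injective x ∧ Function.Injective y ∧
    (∀ i j, x i ≠ y j) ∧
    ∀ σ : Finset V, σ ∈ Δ.faces ↔
      ((∀ v ∈ σ, ∃ i, v = x i ∨ v = y i) ∧ ∀ i, ¬(x i ∈ σ ∧ y i ∈ σ))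

/-- `Δ` is a simplicial 2-sphere: a connected weak 2-pseudomanifold whose vertex
links are circles and whose reduced Euler characteristic is 1. -/
def IsSphere2 (Δ : SC V) : Prop :=
  Δ.Connected ∧ Δ.IsWeakPseudo 2 ∧
    (∀ v ∈ Δ.vertexSet, ∃ n, 3 ≤ n ∧ (Δ.link {v}).IsCycle n) ∧ Δ.redChar = 1

/-- `Δ` is a (closed) simplicial 3-manifold: connected, pure of dimension 3, and the
link of every vertex is a simplicial 2-sphere. -/
def Is3Manifold (Δ : SC V) : Prop :=
  Δ.Connected ∧ Δ.Pure 3 ∧ ∀ v ∈ Δ.vertexSet, (Δ.link {v}).IsSphere2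

/-- `Δ` is a disjoint union of cycles, each of length at least 4: it is
1-dimensional, 2-regular and its graph has no triangles. -/
def IsDisjointUnionOfCyclesGe4 (Δ : SC V) : Prop :=
  (∀ σ ∈ Δ.faces, σ.card ≤ 2) ∧
    (∀ v ∈ Δ.vertexSet, (Δ.link {v}).vertexSet.card = 2) ∧
    ∀ u v w : V, ({u, v} : Finset V) ∈ Δ.faces → ({v, w} : Finset V) ∈ Δ.faces →
      ({u, w} : Finset V) ∈ Δ.faces → u = v ∨ v = w ∨ u = w

end SC

lemma link_vertex_aux {V : Type*} [DecidableEq V] {Δ : SC V} {τ : Finset V} {v : V}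
    (hv : v ∈ (Δ.link τ).vertexSet) : v ∉ τ ∧ insert v τ ∈ Δ.faces := by
  rw [SC.vertexSet, Finset.mem_sup] at hv
  obtain ⟨ρ, hρ, hvρ⟩ := hv
  have h1 : ({v} : Finset V) ∈ (Δ.link τ).faces :=
    (Δ.link τ).down_closed hρ (by simpa using hvρ)
  rw [SC.link, Finset.mem_insert] at h1
  rcases h1 with h | h
  · simp at h
  · rw [Finset.mem_filter] at h
    refine ⟨by simpa using h.2.1, by simpa using h.2.2⟩

/-- In a flag `(d-1)`-dimensional complex, two distinct ridges lying in
a common facet have disjoint links. -/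
theorem statement_3 {V : Type*} [DecidableEq V] (Δ : SC V) (d : ℕ)
    (hflag : Δ.IsFlag) (hdim : ∀ τ ∈ Δ.faces, τ.card ≤ d)
    (σ σ₁ σ₂ : Finset V) (hσ : Δ.IsFacet σ) (hσcard : σ.card = d)
    (h1 : σ₁ ⊆ σ) (h2 : σ₂ ⊆ σ) (hc1 : σ₁.card = d - 1) (hc2 : σ₂.card = d - 1)
    (hne : σ₁ ≠ σ₂) :
    Disjoint (Δ.link σ₁).vertexSet (Δ.link σ₂).vertexSet := by
  rw [Finset.disjoint_left]
  intro v hv1 hv2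
  obtain ⟨hv1n, hv1f⟩ := link_vertex_aux hv1
  obtain ⟨hv2n, hv2f⟩ := link_vertex_aux hv2
  have hd : 1 ≤ d := by
    rcases Nat.eq_zero_or_pos d with h0 | h
    · exfalso; apply hne
      have e1 : σ₁ = ∅ := Finset.card_eq_zero.1 (by omega)
      have e2 : σ₂ = ∅ := Finset.card_eq_zero.1 (by omega)
      rw [e1, e2]
    · exact h
  have hsub : σ₁ ∪ σ₂ ⊆ σ := Finset.union_subset h1 h2
  have hss : σ₁ ∩ σ₂ ⊂ σ₁ := by
    refine Finset.ssubset_iff_subset_ne.2 ⟨Finset.inter_subset_left, fun h => hne ?_⟩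
    exact Finset.eq_of_subset_of_card_le (Finset.inter_eq_left.1 h) (by omega)
  have hinter : (σ₁ ∩ σ₂).card + 1 ≤ σ₁.card := Finset.card_lt_card hss
  have hcui : (σ₁ ∪ σ₂).card + (σ₁ ∩ σ₂).card = σ₁.card + σ₂.card :=
    Finset.card_union_add_card_inter σ₁ σ₂
  have hucard : d ≤ (σ₁ ∪ σ₂).card := by omega
  have hσeq : σ₁ ∪ σ₂ = σ := Finset.eq_of_subset_of_card_le hsub (by omega)
  have hvσ : v ∉ σ := by rw [← hσeq]; simp [hv1n, hv2n]
  have key : ∀ u ∈ σ, ({v, u} : Finset V) ∈ Δ.faces := by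
    intro u hu
    rw [← hσeq] at hu
    rcases Finset.mem_union.1 hu with hu | hu
    · exact Δ.down_closed hv1f (by
        simp only [Finset.insert_subset_iff, Finset.singleton_subset_iff]
        exact ⟨Finset.mem_insert_self _ _, Finset.mem_insert_of_mem hu⟩)
    · exact Δ.down_closed hv2f (by
        simp only [Finset.insert_subset_iff, Finset.singleton_subset_iff]
        exact ⟨Finset.mem_insert_self _ _, Finset.mem_insert_of_mem hu⟩)
  have hface : insert v σ ∈ Δ.faces := by
    apply hflag
    intro u hu w hw
    rcases Finset.mem_insert.1 hu with hu' | hu' <;>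
      rcases Finset.mem_insert.1 hw with hw' | hw'
    · subst hu'; subst hw'; exact Δ.down_closed hv1f (by simp)
    · subst hu'; exact key w hw'
    · subst hw'; rw [Finset.pair_comm]; exact key u hu'
    · exact Δ.down_closed hσ.1 (by
        simp only [Finset.insert_subset_iff, Finset.singleton_subset_iff]
        exact ⟨hu', hw'⟩)
  have heq := hσ.2 _ hface (Finset.subset_insert _ _)
  exact hvσ (by rw [heq]; exact Finset.mem_insert_self v σ)
end

section
/- Let Δ be a flag simplicial complex and let σ = τ_1 ∪ τ_2 be a facet of Δ with τ_1 and τ_2 disjoint and nonempty. Then f_0(lk_Δ τ_1) + f_0(lk_Δ τ_2) ≤ f_0(Δ), where f_0 denotes the number of vertices. -/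
open Finset

namespace SC

variable {V : Type*} [DecidableEq V]

variable {V : Type*} [DecidableEq V]

lemma mem_vertexSet_iff (Δ : SC V) (v : V) :
    v ∈ Δ.vertexSet ↔ ({v} : Finset V) ∈ Δ.faces := by
  constructor
  · intro h
    obtain ⟨σ, hσ, hv⟩ := Finset.mem_sup.1 h
    exact Δ.down_closed hσ (Finset.singleton_subset_iff.2 hv)
  · intro h
    exact Finset.mem_sup.2 ⟨{v}, h, Finset.mem_singleton_self v⟩

lemma mem_link_vertexSet_iff (Δ : SC V) (τ : Finset V) (v : V) :
    v ∈ (Δ.link τ).vertexSet ↔ v ∉ τ ∧ insert v τ ∈ Δ.faces := by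
  rw [SC.mem_vertexSet_iff]
  constructor
  · intro h
    rcases Finset.mem_insert.1 h with h | h
    · exact absurd h (Finset.singleton_ne_empty v)
    · simp only [Finset.mem_filter] at h
      refine ⟨Finset.disjoint_singleton_left.1 h.2.1, ?_⟩
      simpa [Finset.insert_union] using h.2.2
  · rintro ⟨hv, hf⟩
    refine Finset.mem_insert.2 (Or.inr ?_)
    simp only [Finset.mem_filter]
    refine ⟨Δ.down_closed hf (Finset.singleton_subset_iff.2 (Finset.mem_insert_self _ _)),
      Finset.disjoint_singleton_left.2 hv, ?_⟩
    simpa [Finset.insert_union] using hf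

lemma pair_mem (Δ : SC V) {ρ : Finset V} (hρ : ρ ∈ Δ.faces) {u w : V}
    (hu : u ∈ ρ) (hw : w ∈ ρ) : ({u, w} : Finset V) ∈ Δ.faces :=
  Δ.down_closed hρ (by
    intro x hx
    rcases Finset.mem_insert.1 hx with rfl | hx
    · exact hu
    · rw [Finset.mem_singleton.1 hx]; exact hw)

end SC

/-- In a flag complex, if a facet `σ` is partitioned into two nonempty
faces `τ₁, τ₂`, then `f₀(lk τ₁) + f₀(lk τ₂) ≤ f₀(Δ)`. -/
theorem statement_5 {V : Type*} [DecidableEq V] (Δ : SC V) (hflag : Δ.IsFlag)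
    (τ₁ τ₂ : Finset V) (hdisj : Disjoint τ₁ τ₂) (h1 : τ₁.Nonempty) (h2 : τ₂.Nonempty)
    (hfacet : Δ.IsFacet (τ₁ ∪ τ₂)) :
    (Δ.link τ₁).vertexSet.card + (Δ.link τ₂).vertexSet.card ≤ Δ.vertexSet.card := by
  have key : ∀ v, v ∈ (Δ.link τ₁).vertexSet → v ∉ (Δ.link τ₂).vertexSet := by
    intro v hv1 hv2
    rw [SC.mem_link_vertexSet_iff] at hv1 hv2
    obtain ⟨hv1n, hf1⟩ := hv1
    obtain ⟨hv2n, hf2⟩ := hv2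
    have hbig : insert v (τ₁ ∪ τ₂) ∈ Δ.faces := by
      apply hflag
      intro u hu w hw
      have mem_cases : ∀ x ∈ insert v (τ₁ ∪ τ₂), x = v ∨ x ∈ τ₁ ∨ x ∈ τ₂ := by
        intro x hx
        rcases Finset.mem_insert.1 hx with rfl | hx
        · exact Or.inl rfl
        · exact Or.inr (Finset.mem_union.1 hx)
      rcases mem_cases u hu with rfl | hu' | hu' <;> rcases mem_cases w hw with rfl | hw' | hw'
      · exact Δ.pair_mem hf1 (Finset.mem_insert_self _ _) (Finset.mem_insert_self _ _)
      · exact Δ.pair_mem hf1 (Finset.mem_insert_self _ _) (Finset.mem_insert_of_mem hw')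
      · exact Δ.pair_mem hf2 (Finset.mem_insert_self _ _) (Finset.mem_insert_of_mem hw')
      · exact Δ.pair_mem hf1 (Finset.mem_insert_of_mem hu') (Finset.mem_insert_self _ _)
      · exact Δ.pair_mem hf1 (Finset.mem_insert_of_mem hu') (Finset.mem_insert_of_mem hw')
      · exact Δ.pair_mem hfacet.1 (Finset.mem_union_left _ hu') (Finset.mem_union_right _ hw')
      · exact Δ.pair_mem hf2 (Finset.mem_insert_of_mem hu') (Finset.mem_insert_self _ _)
      · exact Δ.pair_mem hfacet.1 (Finset.mem_union_right _ hu') (Finset.mem_union_left _ hw')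
      · exact Δ.pair_mem hf2 (Finset.mem_insert_of_mem hu') (Finset.mem_insert_of_mem hw')
    have := hfacet.2 _ hbig (Finset.subset_insert _ _)
    have hvmem : v ∈ τ₁ ∪ τ₂ := by rw [this]; exact Finset.mem_insert_self _ _
    rcases Finset.mem_union.1 hvmem with h | h
    · exact hv1n h
    · exact hv2n h
  have hdisjAB : Disjoint (Δ.link τ₁).vertexSet (Δ.link τ₂).vertexSet :=
    Finset.disjoint_left.2 key
  have hsub : (Δ.link τ₁).vertexSet ∪ (Δ.link τ₂).vertexSet ⊆ Δ.vertexSet := by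
    intro v hv
    rw [SC.mem_vertexSet_iff]
    rcases Finset.mem_union.1 hv with h | h <;> rw [SC.mem_link_vertexSet_iff] at h <;>
      exact Δ.down_closed h.2 (Finset.singleton_subset_iff.2 (Finset.mem_insert_self _ _))
  calc (Δ.link τ₁).vertexSet.card + (Δ.link τ₂).vertexSet.card
      = ((Δ.link τ₁).vertexSet ∪ (Δ.link τ₂).vertexSet).card :=
        (Finset.card_union_of_disjoint hdisjAB).symm
    _ ≤ Δ.vertexSet.card := Finset.card_le_card hsub
end

section
/- Let Δ be a flag weak 3-pseudomanifold on n vertices and let σ = {v_1, v_2, v_3, v_4} be a facet of Δ. Then the sum over all six edges e ⊆ σ of f_0(lk_Δ e) is at most n + 16. -/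
open Finset

section Aux

variable {V : Type*} [DecidableEq V]

lemma mem_vertexSet_iff' (Δ : SC V) {w : V} :
    w ∈ Δ.vertexSet ↔ ({w} : Finset V) ∈ Δ.faces := by
  constructor
  · intro h
    obtain ⟨τ, hτ, hw⟩ := Finset.mem_sup.1 h
    exact Δ.down_closed hτ (Finset.singleton_subset_iff.2 hw)
  · intro h
    exact Finset.mem_sup.2 ⟨{w}, h, Finset.mem_singleton_self w⟩

lemma link_vertexSet_eq (Δ : SC V) (e : Finset V) :
    (Δ.link e).vertexSet =
      Δ.vertexSet.filter fun w => w ∉ e ∧ insert w e ∈ Δ.faces := by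
  ext w
  rw [mem_vertexSet_iff', Finset.mem_filter, mem_vertexSet_iff']
  simp only [SC.link, Finset.mem_insert, Finset.mem_filter]
  constructor
  · rintro (h | ⟨h1, h2, h3⟩)
    · exact absurd h (Finset.singleton_ne_empty w)
    · exact ⟨h1, Finset.disjoint_singleton_left.1 h2, by rwa [← Finset.insert_eq] at h3⟩
  · rintro ⟨h1, h2, h3⟩
    exact Or.inr ⟨h1, Finset.disjoint_singleton_left.2 h2, by rwa [Finset.insert_eq] at h3⟩

end Aux

/-- In a flag weak 3-pseudomanifold on `n` vertices, for any facet `σ`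
the sum of `f₀(lk e)` over the six edges `e ⊆ σ` is at most `n + 16`. -/
theorem statement_6 {V : Type*} [DecidableEq V] (Δ : SC V) (n : ℕ)
    (hflag : Δ.IsFlag) (hpseudo : Δ.IsWeakPseudo 3) (hn : Δ.vertexSet.card = n)
    (σ : Finset V) (hσ : Δ.IsFacet σ) (hcard : σ.card = 4) :
    ∑ e ∈ Finset.powersetCard 2 σ, (Δ.link e).vertexSet.card ≤ n + 16 := by
  classical
  obtain ⟨hpure, hridge⟩ := hpseudo
  have hσf : σ ∈ Δ.faces := hσ.1
  have hσV : σ ⊆ Δ.vertexSet := fun v hv =>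
    (mem_vertexSet_iff' Δ).2 (Δ.down_closed hσf (Finset.singleton_subset_iff.2 hv))
  have hpairσ : ∀ u ∈ σ, ∀ v ∈ σ, ({u, v} : Finset V) ∈ Δ.faces := fun u hu v hv =>
    Δ.down_closed hσf (Finset.insert_subset hu (Finset.singleton_subset_iff.2 hv))
  set W := Δ.vertexSet with hW
  set A : V → Finset V := fun w => σ.filter fun v => ({w, v} : Finset V) ∈ Δ.faces with hA
  -- flag closure helper
  have hins : ∀ (w : V) (ρ : Finset V), ρ ⊆ σ → ρ.Nonempty →
      (∀ v ∈ ρ, ({w, v} : Finset V) ∈ Δ.faces) → insert w ρ ∈ Δ.faces := by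
    rintro w ρ hρσ ⟨v0, hv0⟩ hadj
    apply hflag
    intro u hu v hv
    have hw1 : ({w, w} : Finset V) ∈ Δ.faces := by
      have h1 : ({w} : Finset V) ∈ Δ.faces :=
        Δ.down_closed (hadj v0 hv0) (Finset.singleton_subset_iff.2 (Finset.mem_insert_self _ _))
      simpa using h1
    rcases Finset.mem_insert.1 hu with hu | hu <;> rcases Finset.mem_insert.1 hv with hv | hv
    · rw [hu, hv]; exact hw1
    · rw [hu]; exact hadj v hv
    · rw [hv, Finset.pair_comm]; exact hadj u hu
    · exact hpairσ u (hρσ hu) v (hρσ hv)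
  -- A w has at most 3 elements for w outside σ
  have hAcard : ∀ w ∉ σ, (A w).card ≤ 3 := by
    intro w hw
    by_contra h
    push_neg at h
    have hAσ : A w = σ :=
      Finset.eq_of_subset_of_card_le (Finset.filter_subset _ _) (by omega)
    have hσne : σ.Nonempty := Finset.card_pos.1 (by omega)
    have hface : insert w σ ∈ Δ.faces := by
      refine hins w σ Finset.Subset.rfl hσne ?_
      intro v hv
      rw [← hAσ] at hv
      exact (Finset.mem_filter.1 hv).2
    have h5 : (insert w σ).card = 5 := by
      rw [Finset.card_insert_of_notMem hw, hcard]
    have := hpure.1 _ hface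
    omega
  -- counting bound for w in σ
  have hcntσ : ∀ w ∈ σ, ((Finset.powersetCard 2 σ).filter
      fun e => w ∉ e ∧ insert w e ∈ Δ.faces).card ≤ 3 := by
    intro w hw
    have hsub : ((Finset.powersetCard 2 σ).filter fun e => w ∉ e ∧ insert w e ∈ Δ.faces)
        ⊆ Finset.powersetCard 2 (σ.erase w) := by
      intro e he
      rw [Finset.mem_filter, Finset.mem_powersetCard] at he
      rw [Finset.mem_powersetCard]
      exact ⟨fun x hx => Finset.mem_erase.2 ⟨fun hxe => he.2.1 (hxe ▸ hx), he.1.1 hx⟩, he.1.2⟩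
    have := Finset.card_le_card hsub
    rwa [Finset.card_powersetCard, Finset.card_erase_of_mem hw, hcard] at this
  -- counting bound for w outside σ
  have hcnt_out : ∀ w ∉ σ, ((Finset.powersetCard 2 σ).filter
      fun e => w ∉ e ∧ insert w e ∈ Δ.faces).card ≤ (A w).card.choose 2 := by
    intro w hw
    have hsub : ((Finset.powersetCard 2 σ).filter fun e => w ∉ e ∧ insert w e ∈ Δ.faces)
        ⊆ Finset.powersetCard 2 (A w) := by
      intro e he
      rw [Finset.mem_filter, Finset.mem_powersetCard] at he
      obtain ⟨⟨heσ, hec⟩, _, hface⟩ := he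
      rw [Finset.mem_powersetCard]
      refine ⟨fun v hv => ?_, hec⟩
      rw [hA]
      simp only [Finset.mem_filter]
      refine ⟨heσ hv, Δ.down_closed hface ?_⟩
      intro x hx
      rcases Finset.mem_insert.1 hx with rfl | hx
      · exact Finset.mem_insert_self _ _
      · rw [Finset.mem_singleton] at hx
        exact hx ▸ Finset.mem_insert_of_mem hv
    have := Finset.card_le_card hsub
    rwa [Finset.card_powersetCard] at this
  -- the special vertices
  set T := (W \ σ).filter (fun w => (A w).card = 3) with hT
  have hTcard : T.card ≤ 4 := by
    have hmap : ∀ w ∈ T, A w ∈ Finset.powersetCard 3 σ := by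
      intro w hw
      rw [hT, Finset.mem_filter] at hw
      exact Finset.mem_powersetCard.2 ⟨Finset.filter_subset _ _, hw.2⟩
    have hinj : Set.InjOn A T := by
      intro w hw w' hw' heq
      by_contra hne
      rw [Finset.mem_coe, Finset.mem_filter, Finset.mem_sdiff] at hw hw'
      obtain ⟨⟨hwV, hwσ⟩, hw3⟩ := hw
      obtain ⟨⟨hw'V, hw'σ⟩, hw'3⟩ := hw'
      set ρ := A w with hρ
      have hρσ : ρ ⊆ σ := Finset.filter_subset _ _
      have hρf : ρ ∈ Δ.faces := Δ.down_closed hσf hρσ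
      have hρ3 : ρ.card = 3 := hw3
      have hρne : ρ.Nonempty := Finset.card_pos.1 (by omega)
      have hadj : ∀ v ∈ ρ, ({w, v} : Finset V) ∈ Δ.faces := fun v hv =>
        (Finset.mem_filter.1 hv).2
      have hadj' : ∀ v ∈ ρ, ({w', v} : Finset V) ∈ Δ.faces := by
        intro v hv
        have hv' : v ∈ A w' := by rw [← heq]; exact hv
        exact (Finset.mem_filter.1 hv').2
      have hf1 : insert w ρ ∈ Δ.faces := hins w ρ hρσ hρne hadj
      have hf2 : insert w' ρ ∈ Δ.faces := hins w' ρ hρσ hρne hadj'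
      have hwρ : w ∉ ρ := fun h => hwσ (hρσ h)
      have hw'ρ : w' ∉ ρ := fun h => hw'σ (hρσ h)
      have h2 := hridge ρ hρf hρ3
      have hsub : ({σ, insert w ρ, insert w' ρ} : Finset (Finset V)) ⊆
          Δ.faces.filter fun τ => ρ ⊆ τ ∧ τ.card = 4 := by
        intro τ hτ
        simp only [Finset.mem_insert, Finset.mem_singleton] at hτ
        rw [Finset.mem_filter]
        rcases hτ with rfl | rfl | rfl
        · exact ⟨hσf, hρσ, hcard⟩
        · exact ⟨hf1, Finset.subset_insert _ _,
            by rw [Finset.card_insert_of_notMem hwρ, hρ3]⟩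
        · exact ⟨hf2, Finset.subset_insert _ _,
            by rw [Finset.card_insert_of_notMem hw'ρ, hρ3]⟩
      have hne1 : σ ≠ insert w ρ := by
        intro h
        exact hwσ (h ▸ Finset.mem_insert_self w ρ)
      have hne2 : σ ≠ insert w' ρ := by
        intro h
        exact hw'σ (h ▸ Finset.mem_insert_self w' ρ)
      have hne3 : insert w ρ ≠ insert w' ρ := by
        intro h
        have : w ∈ insert w' ρ := h ▸ Finset.mem_insert_self w ρ
        rcases Finset.mem_insert.1 this with rfl | h'
        · exact hne rfl
        · exact hwρ h'
      have hc3 : ({σ, insert w ρ, insert w' ρ} : Finset (Finset V)).card = 3 := by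
        rw [Finset.card_insert_of_notMem, Finset.card_insert_of_notMem,
          Finset.card_singleton]
        · rwa [Finset.mem_singleton]
        · simp only [Finset.mem_insert, Finset.mem_singleton]
          push_neg
          exact ⟨hne1, hne2⟩
      have := Finset.card_le_card hsub
      rw [hc3, h2] at this
      omega
    calc T.card ≤ (Finset.powersetCard 3 σ).card :=
          Finset.card_le_card_of_injOn A hmap hinj
      _ = 4 := by
          rw [Finset.card_powersetCard, hcard]
          decide
  -- rewrite the sum as a sum over vertices
  have hrw : ∀ e ∈ Finset.powersetCard 2 σ, (Δ.link e).vertexSet.card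
      = (W.filter fun w => w ∉ e ∧ insert w e ∈ Δ.faces).card := fun e _ => by
    rw [link_vertexSet_eq]
  rw [Finset.sum_congr rfl hrw]
  have hdc : ∑ e ∈ Finset.powersetCard 2 σ,
        (W.filter fun w => w ∉ e ∧ insert w e ∈ Δ.faces).card
      = ∑ w ∈ W, ((Finset.powersetCard 2 σ).filter
          fun e => w ∉ e ∧ insert w e ∈ Δ.faces).card := by
    simp only [Finset.card_filter]
    exact Finset.sum_comm
  rw [hdc, ← Finset.sum_sdiff hσV]
  have h1 : ∑ w ∈ σ, ((Finset.powersetCard 2 σ).filter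
      fun e => w ∉ e ∧ insert w e ∈ Δ.faces).card ≤ 12 := by
    calc ∑ w ∈ σ, ((Finset.powersetCard 2 σ).filter
          fun e => w ∉ e ∧ insert w e ∈ Δ.faces).card
        ≤ ∑ _w ∈ σ, 3 := Finset.sum_le_sum hcntσ
      _ = 12 := by rw [Finset.sum_const, hcard, smul_eq_mul]
  have h2 : ∑ w ∈ W \ σ, ((Finset.powersetCard 2 σ).filter
      fun e => w ∉ e ∧ insert w e ∈ Δ.faces).card ≤ (W \ σ).card + 2 * T.card := by
    calc ∑ w ∈ W \ σ, ((Finset.powersetCard 2 σ).filter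
          fun e => w ∉ e ∧ insert w e ∈ Δ.faces).card
        ≤ ∑ w ∈ W \ σ, (1 + if (A w).card = 3 then 2 else 0) := by
          apply Finset.sum_le_sum
          intro w hw
          have hwσ : w ∉ σ := (Finset.mem_sdiff.1 hw).2
          have hb := hcnt_out w hwσ
          have h3 := hAcard w hwσ
          by_cases hc : (A w).card = 3
          · rw [if_pos hc]
            rw [hc] at hb
            have h32 : Nat.choose 3 2 = 3 := by decide
            omega
          · rw [if_neg hc]
            have hle2 : (A w).card ≤ 2 := by omega
            have := Nat.choose_le_choose 2 hle2
            simp only [Nat.choose_self] at this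
            omega
      _ = (W \ σ).card + 2 * T.card := by
          rw [Finset.sum_add_distrib, Finset.sum_const, smul_eq_mul, mul_one]
          congr 1
          rw [← Finset.sum_filter, Finset.sum_const, smul_eq_mul, mul_comm]
  have hcardWσ : (W \ σ).card = n - 4 := by
    rw [Finset.card_sdiff_of_subset hσV, hcard, hn]
  have h4n : 4 ≤ n := by
    have := Finset.card_le_card hσV
    omega
  rw [hcardWσ] at h2
  omega
end

section
/- Let Δ be a flag 3-dimensional Eulerian simplicial complex on n vertices. Then the number of edges of Δ satisfies f_1(Δ) ≤ ⌊n²/4⌋ + n. -/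
open Finset

namespace StatementEight

open Finset

variable {V : Type*} [DecidableEq V]

/-- faces of cardinality `i` -/
def K (Δ : SC V) (i : ℕ) : Finset (Finset V) := Δ.faces.filter fun σ => σ.card = i

/-- neighbours of `w` -/
def Nb (Δ : SC V) (w : V) : Finset V :=
  Δ.vertexSet.filter fun x => ({w, x} : Finset V) ∈ Δ.faces ∧ x ≠ w

/-- non-neighbours of `w` -/
def Tt (Δ : SC V) (w : V) : Finset V :=
  Δ.vertexSet.filter fun x => ({w, x} : Finset V) ∉ Δ.faces

lemma mem_vertexSet_of_mem {Δ : SC V} {σ : Finset V} {x : V} (hσ : σ ∈ Δ.faces)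
    (hx : x ∈ σ) : x ∈ Δ.vertexSet :=
  Finset.mem_sup.2 ⟨σ, hσ, hx⟩

lemma singleton_mem {Δ : SC V} {x : V} (hx : x ∈ Δ.vertexSet) : ({x} : Finset V) ∈ Δ.faces := by
  obtain ⟨σ, hσ, hxσ⟩ := Finset.mem_sup.1 hx
  exact Δ.down_closed hσ (Finset.singleton_subset_iff.2 hxσ)

lemma face_subset_vertexSet {Δ : SC V} {σ : Finset V} (hσ : σ ∈ Δ.faces) :
    σ ⊆ Δ.vertexSet := fun _ hx => mem_vertexSet_of_mem hσ hx

lemma card_le_four {Δ : SC V} (heul : Δ.IsEulerian 3) {σ : Finset V} (hσ : σ ∈ Δ.faces) :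
    σ.card ≤ 4 := heul.1.1 σ hσ

/-- Lemma E: the alternating sum over supersets of any face is 1. -/
lemma lemE {Δ : SC V} (heul : Δ.IsEulerian 3) {ρ : Finset V} (hρ : ρ ∈ Δ.faces) :
    ∑ σ ∈ Δ.faces.filter (fun σ => ρ ⊆ σ), (-1 : ℤ) ^ σ.card = 1 := by
  have hlink : (Δ.link ρ).faces
      = Δ.faces.filter fun τ => Disjoint τ ρ ∧ τ ∪ ρ ∈ Δ.faces := by
    show insert ∅ _ = _
    refine Finset.insert_eq_self.2 ?_
    refine Finset.mem_filter.2 ⟨Δ.empty_mem, Finset.disjoint_empty_left ρ, ?_⟩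
    rwa [Finset.empty_union]
  have hred := heul.2 ρ hρ
  have hsum : ∑ σ ∈ Δ.faces.filter (fun σ => ρ ⊆ σ), (-1 : ℤ) ^ σ.card
      = (-1 : ℤ) ^ ρ.card * ∑ τ ∈ (Δ.link ρ).faces, (-1 : ℤ) ^ τ.card := by
    rw [hlink, Finset.mul_sum]
    refine Finset.sum_nbij' (fun σ => σ \ ρ) (fun τ => τ ∪ ρ) ?_ ?_ ?_ ?_ ?_
    · intro σ hσ
      simp only [Finset.mem_filter] at hσ ⊢
      exact ⟨Δ.down_closed hσ.1 (Finset.sdiff_subset), Finset.sdiff_disjoint,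
        by rw [Finset.sdiff_union_of_subset hσ.2]; exact hσ.1⟩
    · intro τ hτ
      simp only [Finset.mem_filter] at hτ ⊢
      exact ⟨hτ.2.2, Finset.subset_union_right⟩
    · intro σ hσ
      simp only [Finset.mem_filter] at hσ
      exact Finset.sdiff_union_of_subset hσ.2
    · intro τ hτ
      simp only [Finset.mem_filter] at hτ
      exact Finset.union_sdiff_cancel_right hτ.2.1
    · intro σ hσ
      simp only [Finset.mem_filter] at hσ
      rw [← pow_add]
      congr 1
      show σ.card = ρ.card + (σ \ ρ).card
      have h1 : (σ \ ρ).card = σ.card - ρ.card := Finset.card_sdiff_of_subset hσ.2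
      have hle := Finset.card_le_card hσ.2
      omega
  rw [hsum]
  have hχ : ∑ τ ∈ (Δ.link ρ).faces, (-1 : ℤ) ^ τ.card = -(Δ.link ρ).redChar := by
    simp [SC.redChar]
  rw [hχ]
  have h2 : ((-1 : ℤ) ^ ρ.card) * ((-1 : ℤ) ^ ρ.card) = 1 := by
    rw [← pow_add]
    exact Even.neg_one_pow ⟨ρ.card, rfl⟩
  have h3 : (-1 : ℤ) ^ ρ.card * -(Δ.link ρ).redChar
      = -((Δ.link ρ).redChar * (-1 : ℤ) ^ ρ.card) := by ring
  rw [h3, hred]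
  norm_num

end StatementEight

namespace StatementEight

open Finset

variable {V : Type*} [DecidableEq V]

/-- Every triangle is in exactly two tetrahedra. -/
lemma two_supers {Δ : SC V} (heul : Δ.IsEulerian 3) {ρ : Finset V} (hρ : ρ ∈ Δ.faces)
    (hρ3 : ρ.card = 3) :
    (Δ.faces.filter fun σ => σ.card = 4 ∧ ρ ⊆ σ).card = 2 := by
  have hE := lemE heul hρ
  have hsplit : Δ.faces.filter (fun σ => ρ ⊆ σ)
      = insert ρ (Δ.faces.filter fun σ => σ.card = 4 ∧ ρ ⊆ σ) := by
    ext σ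
    simp only [Finset.mem_filter, Finset.mem_insert]
    constructor
    · rintro ⟨hσ, hsub⟩
      have h4 := card_le_four heul hσ
      have h3 : 3 ≤ σ.card := hρ3 ▸ Finset.card_le_card hsub
      rcases Nat.eq_or_lt_of_le h3 with h | h
      · left
        exact (Finset.eq_of_subset_of_card_le hsub (by omega)).symm
      · right; exact ⟨hσ, by omega, hsub⟩
    · rintro (rfl | ⟨hσ, _, hsub⟩)
      · exact ⟨hρ, Finset.Subset.refl _⟩
      · exact ⟨hσ, hsub⟩
  rw [hsplit, Finset.sum_insert (by simp [hρ3])] at hE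
  have h2 : ∑ σ ∈ Δ.faces.filter (fun σ => σ.card = 4 ∧ ρ ⊆ σ), (-1 : ℤ) ^ σ.card
      = ((Δ.faces.filter fun σ => σ.card = 4 ∧ ρ ⊆ σ).card : ℤ) := by
    have hone : ∀ σ ∈ Δ.faces.filter (fun σ => σ.card = 4 ∧ ρ ⊆ σ), (-1 : ℤ) ^ σ.card = 1 :=
      fun σ hσ => by rw [(Finset.mem_filter.1 hσ).2.1]; norm_num
    rw [Finset.sum_congr rfl hone, Finset.sum_const, nsmul_eq_mul, mul_one]
  rw [hρ3, h2] at hE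
  have : ((Δ.faces.filter fun σ => σ.card = 4 ∧ ρ ⊆ σ).card : ℤ) = 2 := by linarith
  exact_mod_cast this

set_option linter.unusedSectionVars false in
/-- expanding an alternating sum by cardinality -/
lemma cardsum (S : Finset (Finset V)) (h : ∀ σ ∈ S, σ.card ≤ 4) :
    ∑ σ ∈ S, (-1 : ℤ) ^ σ.card
      = ∑ i ∈ Finset.range 5, (-1 : ℤ) ^ i * ((S.filter fun σ => σ.card = i).card : ℤ) := by
  rw [← Finset.sum_fiberwise_of_maps_to (g := fun σ => σ.card) (t := Finset.range 5)
    (fun σ hσ => Finset.mem_range.2 (show σ.card < 5 by have := h σ hσ; omega))]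
  refine Finset.sum_congr rfl fun i _ => ?_
  have hone : ∀ σ ∈ S.filter (fun σ => σ.card = i), (-1 : ℤ) ^ σ.card = (-1 : ℤ) ^ i :=
    fun σ hσ => by rw [(Finset.mem_filter.1 hσ).2]
  rw [Finset.sum_congr rfl hone, Finset.sum_const, nsmul_eq_mul, mul_comm]

lemma K0_eq {Δ : SC V} : (Δ.faces.filter fun σ => σ.card = 0) = {∅} := by
  ext σ
  simp only [Finset.mem_filter, Finset.card_eq_zero, Finset.mem_singleton]
  exact ⟨fun h => h.2, fun h => ⟨h ▸ Δ.empty_mem, h⟩⟩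

lemma K1_card {Δ : SC V} : (Δ.faces.filter fun σ => σ.card = 1).card = Δ.vertexSet.card := by
  symm
  refine Finset.card_bij (fun x _ => {x}) ?_ ?_ ?_
  · intro x hx
    simp only [Finset.mem_filter]
    exact ⟨singleton_mem hx, Finset.card_singleton x⟩
  · intro x _ y _ h
    exact Finset.singleton_inj.1 h
  · intro σ hσ
    simp only [Finset.mem_filter, Finset.card_eq_one] at hσ
    obtain ⟨a, rfl⟩ := hσ.2
    exact ⟨a, mem_vertexSet_of_mem hσ.1 (Finset.mem_singleton_self a), rfl⟩

/-- generic double counting of nested pairs -/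
lemma pairs_count {α : Type*} [DecidableEq α] (S T : Finset (Finset α)) :
    ∑ ρ ∈ S, (T.filter fun σ => ρ ⊆ σ).card = ∑ σ ∈ T, (S.filter fun ρ => ρ ⊆ σ).card := by
  simp only [Finset.card_filter]
  exact Finset.sum_comm' (by intro x y; tauto)

/-- number of triangles = twice number of tetrahedra -/
lemma t2_eq_2t3 {Δ : SC V} (heul : Δ.IsEulerian 3) :
    2 * (Δ.faces.filter fun σ => σ.card = 3).card
      = 4 * (Δ.faces.filter fun σ => σ.card = 4).card := by
  have h := pairs_count (Δ.faces.filter fun σ => σ.card = 3)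
      (Δ.faces.filter fun σ => σ.card = 4)
  have hL : ∑ ρ ∈ Δ.faces.filter (fun σ => σ.card = 3),
      ((Δ.faces.filter fun σ => σ.card = 4).filter fun σ => ρ ⊆ σ).card
      = 2 * (Δ.faces.filter fun σ => σ.card = 3).card := by
    rw [Finset.sum_congr rfl (fun ρ hρ => ?_), Finset.sum_const, smul_eq_mul, mul_comm]
    simp only [Finset.mem_filter] at hρ
    rw [Finset.filter_filter]
    exact two_supers heul hρ.1 hρ.2
  have hR : ∑ σ ∈ Δ.faces.filter (fun σ => σ.card = 4),
      ((Δ.faces.filter fun σ => σ.card = 3).filter fun ρ => ρ ⊆ σ).card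
      = 4 * (Δ.faces.filter fun σ => σ.card = 4).card := by
    rw [Finset.sum_congr rfl (fun σ hσ => ?_), Finset.sum_const, smul_eq_mul, mul_comm]
    simp only [Finset.mem_filter] at hσ
    have : (Δ.faces.filter fun ρ => ρ.card = 3).filter (fun ρ => ρ ⊆ σ)
        = σ.powersetCard 3 := by
      ext ρ
      simp only [Finset.mem_filter, Finset.mem_powersetCard]
      exact ⟨fun h => ⟨h.2, h.1.2⟩, fun h => ⟨⟨Δ.down_closed hσ.1 h.1, h.2⟩, h.1⟩⟩
    rw [this, Finset.card_powersetCard, hσ.2]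
    decide
  rw [hL, hR] at h
  exact h

end StatementEight

namespace StatementEight

open Finset

variable {V : Type*} [DecidableEq V]

/-- Euler relation: `f₁ = f₀ + f₃`. -/
lemma edges_eq {Δ : SC V} (heul : Δ.IsEulerian 3) :
    (Δ.faces.filter fun σ => σ.card = 2).card
      = Δ.vertexSet.card + (Δ.faces.filter fun σ => σ.card = 4).card := by
  have hall : Δ.faces.filter (fun σ => (∅ : Finset V) ⊆ σ) = Δ.faces :=
    Finset.filter_true_of_mem fun σ _ => Finset.empty_subset σ
  have hE := lemE heul Δ.empty_mem
  rw [hall, cardsum Δ.faces (fun σ hσ => card_le_four heul hσ)] at hE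
  rw [Finset.sum_range_succ, Finset.sum_range_succ, Finset.sum_range_succ,
    Finset.sum_range_succ, Finset.sum_range_succ, Finset.sum_range_zero] at hE
  rw [K0_eq] at hE
  norm_num at hE
  rw [K1_card] at hE
  have h23 := t2_eq_2t3 heul
  set a := Δ.vertexSet.card
  set b := (Δ.faces.filter fun σ : Finset V => σ.card = 2).card
  set c := (Δ.faces.filter fun σ : Finset V => σ.card = 3).card
  set d := (Δ.faces.filter fun σ : Finset V => σ.card = 4).card
  omega

lemma t3_pos {Δ : SC V} (heul : Δ.IsEulerian 3) :
    1 ≤ (Δ.faces.filter fun σ => σ.card = 4).card := by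
  obtain ⟨σ, hσ, hc⟩ := heul.1.2.1
  refine Finset.card_pos.2 ⟨σ, Finset.mem_filter.2 ⟨hσ, by omega⟩⟩

/-- trichotomy of vertices relative to `w` -/
lemma mem_Tt_iff {Δ : SC V} {w x : V} (hw : w ∈ Δ.vertexSet) (hx : x ∈ Δ.vertexSet) :
    x ∈ Tt Δ w ↔ (x ≠ w ∧ x ∉ Nb Δ w) := by
  simp only [Tt, Nb, Finset.mem_filter, hx, true_and]
  constructor
  · intro h
    refine ⟨fun hxw => h ?_, fun hc => h hc.1⟩
    subst hxw
    have : ({x, x} : Finset V) = {x} := by simp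
    rw [this]
    exact singleton_mem hx
  · intro ⟨h1, h2⟩ hc
    exact h2 ⟨hc, h1⟩

lemma not_mem_Nb_self {Δ : SC V} (w : V) : w ∉ Nb Δ w := by
  simp [Nb]

lemma not_mem_Tt_self {Δ : SC V} {w : V} (hw : w ∈ Δ.vertexSet) : w ∉ Tt Δ w := by
  simp only [Tt, Finset.mem_filter, hw, true_and, not_not]
  have : ({w, w} : Finset V) = {w} := by simp
  rw [this]
  exact singleton_mem hw

lemma Nb_subset {Δ : SC V} (w : V) : Nb Δ w ⊆ Δ.vertexSet := Finset.filter_subset _ _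
lemma Tt_subset {Δ : SC V} (w : V) : Tt Δ w ⊆ Δ.vertexSet := Finset.filter_subset _ _

lemma mem_Nb_of_edge {Δ : SC V} {w x : V} (h : ({w, x} : Finset V) ∈ Δ.faces) (hne : x ≠ w) :
    x ∈ Nb Δ w := by
  refine Finset.mem_filter.2 ⟨mem_vertexSet_of_mem h (by simp), h, hne⟩

lemma partition_card {Δ : SC V} {w : V} (hw : w ∈ Δ.vertexSet) :
    Δ.vertexSet.card = 1 + (Nb Δ w).card + (Tt Δ w).card := by
  have hdisj : Disjoint (Nb Δ w) (Tt Δ w) := by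
    rw [Finset.disjoint_left]
    intro x hx hx'
    exact ((mem_Tt_iff hw (Nb_subset w hx)).1 hx').2 hx
  have hV : Δ.vertexSet = insert w (Nb Δ w ∪ Tt Δ w) := by
    ext x
    simp only [Finset.mem_insert, Finset.mem_union]
    constructor
    · intro hx
      by_cases hxw : x = w
      · exact Or.inl hxw
      · by_cases he : ({w, x} : Finset V) ∈ Δ.faces
        · exact Or.inr (Or.inl (Finset.mem_filter.2 ⟨hx, he, hxw⟩))
        · exact Or.inr (Or.inr (Finset.mem_filter.2 ⟨hx, he⟩))
    · rintro (rfl | hx | hx)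
      · exact hw
      · exact Nb_subset w hx
      · exact Tt_subset w hx
  have hwni : w ∉ Nb Δ w ∪ Tt Δ w := by
    simp only [Finset.mem_union]
    rintro (h | h)
    · exact not_mem_Nb_self w h
    · exact not_mem_Tt_self hw h
  rw [hV, Finset.card_insert_of_notMem hwni, Finset.card_union_of_disjoint hdisj]
  omega

end StatementEight

namespace StatementEight

open Finset

variable {V : Type*} [DecidableEq V]

/-- number of edges inside the neighbourhood of `w` -/
def eN (Δ : SC V) (w : V) : ℕ := (Δ.faces.filter fun σ => σ.card = 2 ∧ σ ⊆ Nb Δ w).card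

/-- number of edges inside the non-neighbourhood of `w` -/
def eT (Δ : SC V) (w : V) : ℕ := (Δ.faces.filter fun σ => σ.card = 2 ∧ σ ⊆ Tt Δ w).card

lemma pair_self_mem {Δ : SC V} {w : V} (hw : w ∈ Δ.vertexSet) :
    ({w, w} : Finset V) ∈ Δ.faces := by
  rw [show ({w, w} : Finset V) = {w} by simp]
  exact singleton_mem hw

/-- In a flag complex, a cone over a face inside a neighbourhood is a face. -/
lemma clique_insert {Δ : SC V} (hflag : Δ.IsFlag) {w : V} (hw : w ∈ Δ.vertexSet)
    {τ : Finset V} (hτ : τ ∈ Δ.faces) (hsub : τ ⊆ Nb Δ w) : insert w τ ∈ Δ.faces := by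
  apply hflag
  intro a ha b hb
  simp only [Finset.mem_insert] at ha hb
  have hpair : ∀ x ∈ τ, ({w, x} : Finset V) ∈ Δ.faces := fun x hx =>
    (Finset.mem_filter.1 (hsub hx)).2.1
  rcases ha with rfl | ha
  · rcases hb with rfl | hb
    · exact pair_self_mem hw
    · exact hpair b hb
  · rcases hb with rfl | hb
    · rw [Finset.pair_comm]; exact hpair a ha
    · exact Δ.down_closed hτ (Finset.insert_subset ha (Finset.singleton_subset_iff.2 hb))

/-- degree as a count of edges containing `w` -/
lemma deg_eq_edges {Δ : SC V} (w : V) :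
    (Nb Δ w).card = ((Δ.faces.filter fun σ => σ.card = 2).filter fun σ => w ∈ σ).card := by
  refine Finset.card_bij (fun x _ => {w, x}) ?_ ?_ ?_
  · intro x hx
    obtain ⟨hxV, hxe, hxw⟩ := Finset.mem_filter.1 hx
    simp only [Finset.mem_filter]
    exact ⟨⟨hxe, Finset.card_pair (Ne.symm hxw)⟩, Finset.mem_insert_self w {x}⟩
  · intro x hx y hy h
    obtain ⟨_, _, hxw⟩ := Finset.mem_filter.1 hx
    have h' : ({w, x} : Finset V) = {w, y} := h
    have : x ∈ ({w, y} : Finset V) := h' ▸ Finset.mem_insert_of_mem (Finset.mem_singleton_self x)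
    simp only [Finset.mem_insert, Finset.mem_singleton] at this
    tauto
  · intro σ hσ
    obtain ⟨h1, hwσ⟩ := Finset.mem_filter.1 hσ
    obtain ⟨hσf, hσ2⟩ := Finset.mem_filter.1 h1
    obtain ⟨a, b, hab, rfl⟩ := Finset.card_eq_two.1 hσ2
    rcases Finset.mem_insert.1 hwσ with rfl | hb
    · exact ⟨b, mem_Nb_of_edge hσf (Ne.symm hab), rfl⟩
    · rw [Finset.mem_singleton] at hb
      subst hb
      exact ⟨a, mem_Nb_of_edge (by rwa [Finset.pair_comm]) hab, show ({w, a} : Finset V) = {a, w} from Finset.pair_comm w a⟩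

/-- edges inside the neighbourhood of `w` are the triangles at `w` -/
lemma eN_eq_triangles {Δ : SC V} (hflag : Δ.IsFlag) {w : V} (hw : w ∈ Δ.vertexSet) :
    eN Δ w = ((Δ.faces.filter fun σ => σ.card = 3).filter fun σ => w ∈ σ).card := by
  refine Finset.card_bij (fun σ _ => insert w σ) ?_ ?_ ?_
  · intro σ hσ
    obtain ⟨hσf, hσ2, hσsub⟩ := Finset.mem_filter.1 hσ
    have hwσ : w ∉ σ := fun hc => not_mem_Nb_self w (hσsub hc)
    simp only [Finset.mem_filter]
    exact ⟨⟨clique_insert hflag hw hσf hσsub, by rw [Finset.card_insert_of_notMem hwσ, hσ2]⟩,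
      Finset.mem_insert_self w σ⟩
  · intro σ hσ τ hτ h
    obtain ⟨_, _, hσsub⟩ := Finset.mem_filter.1 hσ
    obtain ⟨_, _, hτsub⟩ := Finset.mem_filter.1 hτ
    have hwσ : w ∉ σ := fun hc => not_mem_Nb_self w (hσsub hc)
    have hwτ : w ∉ τ := fun hc => not_mem_Nb_self w (hτsub hc)
    have h' : insert w σ = insert w τ := h
    rw [← Finset.erase_insert hwσ, ← Finset.erase_insert hwτ, h']
  · intro ρ hρ
    obtain ⟨h1, hwρ⟩ := Finset.mem_filter.1 hρ
    obtain ⟨hρf, hρ3⟩ := Finset.mem_filter.1 h1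
    refine ⟨ρ.erase w, Finset.mem_filter.2 ⟨Δ.down_closed hρf (Finset.erase_subset w ρ),
      by rw [Finset.card_erase_of_mem hwρ, hρ3], ?_⟩, Finset.insert_erase hwρ⟩
    intro x hx
    obtain ⟨hxw, hxρ⟩ := Finset.mem_erase.1 hx
    exact mem_Nb_of_edge (Δ.down_closed hρf (Finset.insert_subset hwρ
      (Finset.singleton_subset_iff.2 hxρ))) hxw

/-- Alexander-type identity. -/
lemma alexander {Δ : SC V} (heul : Δ.IsEulerian 3) (A : Finset V) :
    ∑ σ ∈ Δ.faces.filter (fun σ => σ ∩ A = ∅), (-1 : ℤ) ^ σ.card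
      = ∑ ρ ∈ Δ.faces.filter (fun ρ => ρ ⊆ A), (-1 : ℤ) ^ ρ.card := by
  have key : ∀ σ ∈ Δ.faces,
      (Δ.faces.filter fun ρ => ρ ⊆ A ∧ ρ ⊆ σ) = (σ ∩ A).powerset := by
    intro σ hσ
    ext ρ
    simp only [Finset.mem_filter, Finset.mem_powerset, Finset.subset_inter_iff]
    constructor
    · rintro ⟨_, h1, h2⟩; exact ⟨h2, h1⟩
    · rintro ⟨h2, h1⟩
      exact ⟨Δ.down_closed hσ (Finset.subset_inter h2 h1 |>.trans Finset.inter_subset_left),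
        h1, h2⟩
  calc ∑ σ ∈ Δ.faces.filter (fun σ => σ ∩ A = ∅), (-1 : ℤ) ^ σ.card
      = ∑ σ ∈ Δ.faces, (if σ ∩ A = ∅ then (1 : ℤ) else 0) * (-1) ^ σ.card := by
        rw [Finset.sum_filter]
        refine Finset.sum_congr rfl fun σ _ => ?_
        split_ifs <;> simp
    _ = ∑ σ ∈ Δ.faces, (∑ ρ ∈ (σ ∩ A).powerset, (-1 : ℤ) ^ ρ.card) * (-1) ^ σ.card := by
        refine Finset.sum_congr rfl fun σ _ => ?_
        rw [Finset.sum_powerset_neg_one_pow_card]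
    _ = ∑ σ ∈ Δ.faces, ∑ ρ ∈ Δ.faces.filter (fun ρ => ρ ⊆ A ∧ ρ ⊆ σ),
          (-1 : ℤ) ^ ρ.card * (-1) ^ σ.card := by
        refine Finset.sum_congr rfl fun σ hσ => ?_
        rw [← key σ hσ, Finset.sum_mul]
    _ = ∑ σ ∈ Δ.faces, ∑ ρ ∈ Δ.faces,
          (if ρ ⊆ A ∧ ρ ⊆ σ then (-1 : ℤ) ^ ρ.card * (-1) ^ σ.card else 0) := by
        refine Finset.sum_congr rfl fun σ _ => ?_
        rw [Finset.sum_filter]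
    _ = ∑ ρ ∈ Δ.faces, ∑ σ ∈ Δ.faces,
          (if ρ ⊆ A ∧ ρ ⊆ σ then (-1 : ℤ) ^ ρ.card * (-1) ^ σ.card else 0) := Finset.sum_comm
    _ = ∑ ρ ∈ Δ.faces, (if ρ ⊆ A then
          ∑ σ ∈ Δ.faces, (if ρ ⊆ σ then (-1 : ℤ) ^ ρ.card * (-1) ^ σ.card else 0) else 0) := by
        refine Finset.sum_congr rfl fun ρ _ => ?_
        by_cases h : ρ ⊆ A
        · simp only [h, true_and, if_true]
        · simp only [h, false_and, if_false, Finset.sum_const_zero]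
    _ = ∑ ρ ∈ Δ.faces.filter (fun ρ => ρ ⊆ A),
          ∑ σ ∈ Δ.faces, (if ρ ⊆ σ then (-1 : ℤ) ^ ρ.card * (-1) ^ σ.card else 0) :=
        (Finset.sum_filter _ _).symm
    _ = ∑ ρ ∈ Δ.faces.filter (fun ρ => ρ ⊆ A), (-1 : ℤ) ^ ρ.card := by
        refine Finset.sum_congr rfl fun ρ hρ => ?_
        rw [← Finset.sum_filter, ← Finset.mul_sum, lemE heul (Finset.mem_filter.1 hρ).1, mul_one]

end StatementEight

namespace StatementEight

open Finset

variable {V : Type*} [DecidableEq V]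

lemma sumA_zero {Δ : SC V} (hflag : Δ.IsFlag) {w : V} (hw : w ∈ Δ.vertexSet) :
    ∑ ρ ∈ Δ.faces.filter (fun ρ => ρ ⊆ insert w (Nb Δ w)), (-1 : ℤ) ^ ρ.card = 0 := by
  have hsplit := Finset.sum_filter_add_sum_filter_not
    (Δ.faces.filter (fun ρ => ρ ⊆ insert w (Nb Δ w))) (fun ρ => w ∈ ρ)
    (fun ρ => (-1 : ℤ) ^ ρ.card)
  have hmem : ∀ {ρ : Finset V}, ρ ∈ Δ.faces → w ∈ ρ → ρ ⊆ insert w (Nb Δ w) := by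
    intro ρ hρ hwρ x hx
    rcases eq_or_ne x w with rfl | hxw
    · exact Finset.mem_insert_self x _
    · refine Finset.mem_insert_of_mem (mem_Nb_of_edge ?_ hxw)
      exact Δ.down_closed hρ (Finset.insert_subset hwρ (Finset.singleton_subset_iff.2 hx))
  have hS1 : (Δ.faces.filter (fun ρ => ρ ⊆ insert w (Nb Δ w))).filter (fun ρ => w ∈ ρ)
      = Δ.faces.filter (fun ρ => w ∈ ρ) := by
    rw [Finset.filter_filter]
    ext ρ
    simp only [Finset.mem_filter]
    exact ⟨fun h => ⟨h.1, h.2.2⟩, fun h => ⟨h.1, hmem h.1 h.2, h.2⟩⟩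
  have hS2 : (Δ.faces.filter (fun ρ => ρ ⊆ insert w (Nb Δ w))).filter (fun ρ => w ∉ ρ)
      = Δ.faces.filter (fun ρ => ρ ⊆ Nb Δ w) := by
    rw [Finset.filter_filter]
    ext ρ
    simp only [Finset.mem_filter]
    constructor
    · rintro ⟨h1, h2, h3⟩
      refine ⟨h1, fun x hx => ?_⟩
      rcases Finset.mem_insert.1 (h2 hx) with rfl | h
      · exact absurd hx h3
      · exact h
    · rintro ⟨h1, h2⟩
      exact ⟨h1, h2.trans (Finset.subset_insert w _), fun hc => not_mem_Nb_self w (h2 hc)⟩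
  have hbij : ∑ ρ ∈ Δ.faces.filter (fun ρ => w ∈ ρ), (-1 : ℤ) ^ ρ.card
      = ∑ τ ∈ Δ.faces.filter (fun τ => τ ⊆ Nb Δ w), (-1 : ℤ) ^ (τ.card + 1) := by
    refine Finset.sum_nbij' (fun ρ => ρ.erase w) (fun τ => insert w τ) ?_ ?_ ?_ ?_ ?_
    · intro ρ hρ
      obtain ⟨hρf, hwρ⟩ := Finset.mem_filter.1 hρ
      refine Finset.mem_filter.2 ⟨Δ.down_closed hρf (Finset.erase_subset w ρ), ?_⟩
      intro x hx
      obtain ⟨hxw, hxρ⟩ := Finset.mem_erase.1 hx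
      exact mem_Nb_of_edge (Δ.down_closed hρf (Finset.insert_subset hwρ
        (Finset.singleton_subset_iff.2 hxρ))) hxw
    · intro τ hτ
      obtain ⟨hτf, hτsub⟩ := Finset.mem_filter.1 hτ
      exact Finset.mem_filter.2 ⟨clique_insert hflag hw hτf hτsub, Finset.mem_insert_self w τ⟩
    · intro ρ hρ
      exact Finset.insert_erase (Finset.mem_filter.1 hρ).2
    · intro τ hτ
      have hwτ : w ∉ τ := fun hc => not_mem_Nb_self w ((Finset.mem_filter.1 hτ).2 hc)
      exact Finset.erase_insert hwτ
    · intro ρ hρ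
      obtain ⟨hρf, hwρ⟩ := Finset.mem_filter.1 hρ
      have : (ρ.erase w).card + 1 = ρ.card := by
        rw [Finset.card_erase_of_mem hwρ]
        have := Finset.card_pos.2 ⟨w, hwρ⟩
        omega
      rw [this]
  rw [hS1, hS2, hbij, ← Finset.sum_add_distrib] at hsplit
  have hzero : ∀ τ ∈ Δ.faces.filter (fun τ => τ ⊆ Nb Δ w),
      (-1 : ℤ) ^ (τ.card + 1) + (-1 : ℤ) ^ τ.card = 0 := by
    intro τ _
    rw [pow_succ]
    ring
  rw [Finset.sum_congr rfl hzero, Finset.sum_const_zero] at hsplit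
  exact hsplit.symm

/-- KEY LEMMA: the non-neighbourhood of a vertex spans at least `|T| - 1` edges. -/
lemma key_eT {Δ : SC V} (hflag : Δ.IsFlag) (heul : Δ.IsEulerian 3) {w : V}
    (hw : w ∈ Δ.vertexSet) : ((Tt Δ w).card : ℤ) ≤ (eT Δ w : ℤ) + 1 := by
  have halex := alexander heul (insert w (Nb Δ w))
  rw [sumA_zero hflag hw] at halex
  have hset : Δ.faces.filter (fun σ => σ ∩ insert w (Nb Δ w) = ∅)
      = Δ.faces.filter (fun σ => σ ⊆ Tt Δ w) := by
    ext σ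
    simp only [Finset.mem_filter, Finset.eq_empty_iff_forall_notMem, Finset.mem_inter,
      Finset.mem_insert, not_and, not_or]
    constructor
    · rintro ⟨hσf, h⟩
      refine ⟨hσf, fun x hx => ?_⟩
      have hx' := h x hx
      rw [mem_Tt_iff hw (mem_vertexSet_of_mem hσf hx)]
      exact ⟨hx'.1, hx'.2⟩
    · rintro ⟨hσf, h⟩
      refine ⟨hσf, fun x hx => ?_⟩
      have := (mem_Tt_iff hw (mem_vertexSet_of_mem hσf hx)).1 (h hx)
      exact ⟨this.1, this.2⟩
  rw [hset] at halex
  set S := Δ.faces.filter (fun σ => σ ⊆ Tt Δ w) with hS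
  have hcards := cardsum S (fun σ hσ => card_le_four heul (Finset.mem_filter.1 hσ).1)
  rw [hcards] at halex
  rw [Finset.sum_range_succ, Finset.sum_range_succ, Finset.sum_range_succ,
    Finset.sum_range_succ, Finset.sum_range_succ, Finset.sum_range_zero] at halex
  have hc0 : S.filter (fun σ => σ.card = 0) = {∅} := by
    ext σ
    simp only [Finset.mem_filter, Finset.card_eq_zero, Finset.mem_singleton, hS]
    constructor
    · rintro ⟨_, h⟩; exact h
    · rintro rfl
      exact ⟨⟨Δ.empty_mem, Finset.empty_subset _⟩, rfl⟩
  have hc1 : (S.filter (fun σ => σ.card = 1)).card = (Tt Δ w).card := by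
    symm
    refine Finset.card_bij (fun x _ => {x}) ?_ ?_ ?_
    · intro x hx
      simp only [hS, Finset.mem_filter, Finset.filter_filter]
      exact ⟨singleton_mem (Tt_subset w hx), Finset.singleton_subset_iff.2 hx,
        Finset.card_singleton x⟩
    · intro x _ y _ h
      exact Finset.singleton_inj.1 h
    · intro σ hσ
      rw [hS, Finset.filter_filter] at hσ
      obtain ⟨h1, h2, h3⟩ := Finset.mem_filter.1 hσ
      obtain ⟨a, rfl⟩ := Finset.card_eq_one.1 h3
      exact ⟨a, Finset.singleton_subset_iff.1 h2, rfl⟩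
  have hc2 : (S.filter (fun σ => σ.card = 2)).card = eT Δ w := by
    rw [hS, Finset.filter_filter, eT]
    congr 1
    ext σ
    simp only [Finset.mem_filter]
    tauto
  have hc34 : 4 * (S.filter (fun σ => σ.card = 4)).card
      ≤ 2 * (S.filter (fun σ => σ.card = 3)).card := by
    have hpc := pairs_count (S.filter (fun σ => σ.card = 3)) (S.filter (fun σ => σ.card = 4))
    have hR : ∑ σ ∈ S.filter (fun σ => σ.card = 4),
        ((S.filter (fun σ => σ.card = 3)).filter fun ρ => ρ ⊆ σ).card
        = 4 * (S.filter (fun σ => σ.card = 4)).card := by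
      rw [Finset.sum_congr rfl (fun σ hσ => ?_), Finset.sum_const, smul_eq_mul, mul_comm]
      obtain ⟨h1, h4⟩ := Finset.mem_filter.1 hσ
      obtain ⟨hσf, hσT⟩ := Finset.mem_filter.1 h1
      have : (S.filter (fun σ => σ.card = 3)).filter (fun ρ => ρ ⊆ σ)
          = σ.powersetCard 3 := by
        ext ρ
        simp only [hS, Finset.mem_filter, Finset.mem_powersetCard, Finset.filter_filter]
        constructor
        · rintro ⟨_, ⟨_, h3⟩, hsub⟩
          exact ⟨hsub, h3⟩
        · rintro ⟨hsub, h3⟩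
          exact ⟨Δ.down_closed hσf hsub, ⟨hsub.trans hσT, h3⟩, hsub⟩
      rw [this, Finset.card_powersetCard, h4]
      decide
    have hL : ∑ ρ ∈ S.filter (fun σ => σ.card = 3),
        ((S.filter (fun σ => σ.card = 4)).filter fun σ => ρ ⊆ σ).card
        ≤ 2 * (S.filter (fun σ => σ.card = 3)).card := by
      rw [mul_comm, ← smul_eq_mul, ← Finset.sum_const]
      refine Finset.sum_le_sum fun ρ hρ => ?_
      obtain ⟨h1, h3⟩ := Finset.mem_filter.1 hρ
      obtain ⟨hρf, _⟩ := Finset.mem_filter.1 h1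
      calc ((S.filter (fun σ => σ.card = 4)).filter fun σ => ρ ⊆ σ).card
          ≤ (Δ.faces.filter fun σ => σ.card = 4 ∧ ρ ⊆ σ).card := by
            refine Finset.card_le_card fun σ hσ => ?_
            rw [hS, Finset.filter_filter, Finset.filter_filter] at hσ
            obtain ⟨h5, -, h6, hsub⟩ := Finset.mem_filter.1 hσ
            exact Finset.mem_filter.2 ⟨h5, h6, hsub⟩
        _ = 2 := two_supers heul hρf h3
    omega
  rw [hc0, hc1, hc2] at halex
  simp only [Finset.card_singleton] at halex
  push_cast at halex
  have h34 : (4 : ℤ) * (S.filter (fun σ => σ.card = 4)).card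
      ≤ 2 * (S.filter (fun σ => σ.card = 3)).card := by exact_mod_cast hc34
  norm_num at halex
  linarith

end StatementEight

namespace StatementEight

open Finset

variable {V : Type*} [DecidableEq V]

lemma Nb_dichotomy {Δ : SC V} {w x : V} (hw : w ∈ Δ.vertexSet) (hx : x ∈ Δ.vertexSet)
    (hxw : x ≠ w) (hxN : x ∉ Nb Δ w) : x ∈ Tt Δ w :=
  (mem_Tt_iff hw hx).2 ⟨hxw, hxN⟩

lemma not_Tt_of_Nb {Δ : SC V} {w x : V} (hw : w ∈ Δ.vertexSet) (hx : x ∈ Nb Δ w) :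
    x ∉ Tt Δ w := fun hc => ((mem_Tt_iff hw (Nb_subset w hx)).1 hc).2 hx

/-- Per-vertex edge decomposition. -/
lemma edge_decomp {Δ : SC V} {w : V} (hw : w ∈ Δ.vertexSet) :
    ∑ x ∈ Nb Δ w, (Nb Δ x).card + eT Δ w
      = (Δ.faces.filter fun σ => σ.card = 2).card + eN Δ w := by
  classical
  set E := Δ.faces.filter fun σ => σ.card = 2 with hE
  have stepa : ∑ x ∈ Nb Δ w, (Nb Δ x).card = ∑ σ ∈ E, (σ ∩ Nb Δ w).card := by
    calc ∑ x ∈ Nb Δ w, (Nb Δ x).card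
        = ∑ x ∈ Nb Δ w, (E.filter fun σ => x ∈ σ).card := by
          refine Finset.sum_congr rfl fun x _ => deg_eq_edges x
      _ = ∑ x ∈ Nb Δ w, ∑ σ ∈ E, (if x ∈ σ then 1 else 0) := by
          refine Finset.sum_congr rfl fun x _ => Finset.card_filter _ _
      _ = ∑ σ ∈ E, ∑ x ∈ Nb Δ w, (if x ∈ σ then 1 else 0) := Finset.sum_comm
      _ = ∑ σ ∈ E, (σ ∩ Nb Δ w).card := by
          refine Finset.sum_congr rfl fun σ _ => ?_
          rw [← Finset.card_filter, Finset.filter_mem_eq_inter, Finset.inter_comm]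
  have stepb : ∀ σ ∈ E, (σ ∩ Nb Δ w).card + (if σ ⊆ Tt Δ w then 1 else 0)
      = 1 + (if σ ⊆ Nb Δ w then 1 else 0) := by
    intro σ hσ
    obtain ⟨hσf, hσ2⟩ := Finset.mem_filter.1 hσ
    obtain ⟨u, v, huv, rfl⟩ := Finset.card_eq_two.1 hσ2
    have hu : u ∈ Δ.vertexSet := mem_vertexSet_of_mem hσf (Finset.mem_insert_self u {v})
    have hv : v ∈ Δ.vertexSet := mem_vertexSet_of_mem hσf
      (Finset.mem_insert_of_mem (Finset.mem_singleton_self v))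
    have hinter : ({u, v} ∩ Nb Δ w).card
        = (if u ∈ Nb Δ w then 1 else 0) + (if v ∈ Nb Δ w then 1 else 0) := by
      rw [← Finset.filter_mem_eq_inter, Finset.card_filter, Finset.sum_pair huv]
    have hsubT : ({u, v} : Finset V) ⊆ Tt Δ w ↔ u ∈ Tt Δ w ∧ v ∈ Tt Δ w := by
      rw [Finset.insert_subset_iff, Finset.singleton_subset_iff]
    have hsubN : ({u, v} : Finset V) ⊆ Nb Δ w ↔ u ∈ Nb Δ w ∧ v ∈ Nb Δ w := by
      rw [Finset.insert_subset_iff, Finset.singleton_subset_iff]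
    rw [hinter]
    by_cases huw : u = w
    · subst huw
      have hvN : v ∈ Nb Δ u := mem_Nb_of_edge hσf (Ne.symm huv)
      rw [if_neg (not_mem_Nb_self u), if_pos hvN,
        if_neg (fun hc => not_mem_Tt_self hw (hsubT.1 hc).1),
        if_neg (fun hc => not_mem_Nb_self u (hsubN.1 hc).1)]
    · by_cases hvw : v = w
      · subst hvw
        have huN : u ∈ Nb Δ v := mem_Nb_of_edge (by rwa [Finset.pair_comm]) huw
        rw [if_pos huN, if_neg (not_mem_Nb_self v),
          if_neg (fun hc => not_mem_Tt_self hw (hsubT.1 hc).2),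
          if_neg (fun hc => not_mem_Nb_self v (hsubN.1 hc).2)]
      · by_cases huN : u ∈ Nb Δ w
        · by_cases hvN : v ∈ Nb Δ w
          · rw [if_pos huN, if_pos hvN, if_pos (hsubN.2 ⟨huN, hvN⟩),
              if_neg (fun hc => not_Tt_of_Nb hw huN (hsubT.1 hc).1)]
          · rw [if_pos huN, if_neg hvN, if_neg (fun hc => hvN (hsubN.1 hc).2),
              if_neg (fun hc => not_Tt_of_Nb hw huN (hsubT.1 hc).1)]
        · by_cases hvN : v ∈ Nb Δ w
          · rw [if_neg huN, if_pos hvN, if_neg (fun hc => huN (hsubN.1 hc).1),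
              if_neg (fun hc => not_Tt_of_Nb hw hvN (hsubT.1 hc).2)]
          · rw [if_neg huN, if_neg hvN, if_neg (fun hc => huN (hsubN.1 hc).1),
              if_pos (hsubT.2 ⟨Nb_dichotomy hw hu huw huN, Nb_dichotomy hw hv hvw hvN⟩)]
  have hsum := Finset.sum_congr rfl stepb
  rw [Finset.sum_add_distrib, Finset.sum_add_distrib] at hsum
  have hTt : ∑ σ ∈ E, (if σ ⊆ Tt Δ w then 1 else 0) = eT Δ w := by
    rw [← Finset.card_filter, hE, Finset.filter_filter, eT]
  have hNb : ∑ σ ∈ E, (if σ ⊆ Nb Δ w then 1 else 0) = eN Δ w := by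
    rw [← Finset.card_filter, hE, Finset.filter_filter, eN]
  rw [hTt, hNb, Finset.sum_const, smul_eq_mul, mul_one] at hsum
  rw [stepa]
  omega

/-- symmetry swap: summing degrees over neighbourhoods gives the sum of squared degrees -/
lemma sum_swap_deg {Δ : SC V} :
    ∑ w ∈ Δ.vertexSet, ∑ x ∈ Nb Δ w, (Nb Δ x).card
      = ∑ x ∈ Δ.vertexSet, (Nb Δ x).card * (Nb Δ x).card := by
  have h1 : ∀ w, ∑ x ∈ Nb Δ w, (Nb Δ x).card
      = ∑ x ∈ Δ.vertexSet, (if ({w, x} : Finset V) ∈ Δ.faces ∧ x ≠ w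
          then (Nb Δ x).card else 0) := by
    intro w
    rw [Nb, Finset.sum_filter]
  rw [Finset.sum_congr rfl fun w _ => h1 w, Finset.sum_comm]
  refine Finset.sum_congr rfl fun x hx => ?_
  have h2 : Δ.vertexSet.filter (fun w => ({w, x} : Finset V) ∈ Δ.faces ∧ x ≠ w) = Nb Δ x := by
    ext w
    simp only [Finset.mem_filter, Nb]
    constructor
    · rintro ⟨h3, h4, h5⟩
      exact ⟨h3, by rwa [Finset.pair_comm], Ne.symm h5⟩
    · rintro ⟨h3, h4, h5⟩
      exact ⟨h3, by rwa [Finset.pair_comm], Ne.symm h5⟩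
  rw [← Finset.sum_filter, h2, Finset.sum_const, smul_eq_mul]

/-- the sum of degrees is twice the number of edges -/
lemma sum_deg {Δ : SC V} :
    ∑ w ∈ Δ.vertexSet, (Nb Δ w).card = 2 * (Δ.faces.filter fun σ => σ.card = 2).card := by
  calc ∑ w ∈ Δ.vertexSet, (Nb Δ w).card
      = ∑ w ∈ Δ.vertexSet, ∑ σ ∈ Δ.faces.filter (fun σ => σ.card = 2),
          (if w ∈ σ then 1 else 0) := by
        refine Finset.sum_congr rfl fun w _ => ?_
        rw [deg_eq_edges w, Finset.card_filter]
    _ = ∑ σ ∈ Δ.faces.filter (fun σ => σ.card = 2), ∑ w ∈ Δ.vertexSet,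
          (if w ∈ σ then 1 else 0) := Finset.sum_comm
    _ = 2 * (Δ.faces.filter fun σ => σ.card = 2).card := by
        rw [Finset.sum_congr rfl (fun σ hσ => ?_), Finset.sum_const, smul_eq_mul, mul_comm]
        obtain ⟨hσf, hσ2⟩ := Finset.mem_filter.1 hσ
        rw [← Finset.card_filter, Finset.filter_mem_eq_inter,
          Finset.inter_eq_right.2 (face_subset_vertexSet hσf), hσ2]

/-- the sum of neighbourhood-edge counts is three times the number of triangles -/
lemma sum_eN {Δ : SC V} (hflag : Δ.IsFlag) :
    ∑ w ∈ Δ.vertexSet, eN Δ w = 3 * (Δ.faces.filter fun σ => σ.card = 3).card := by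
  calc ∑ w ∈ Δ.vertexSet, eN Δ w
      = ∑ w ∈ Δ.vertexSet, ∑ ρ ∈ Δ.faces.filter (fun σ => σ.card = 3),
          (if w ∈ ρ then 1 else 0) := by
        refine Finset.sum_congr rfl fun w hw => ?_
        rw [eN_eq_triangles hflag hw, Finset.card_filter]
    _ = ∑ ρ ∈ Δ.faces.filter (fun σ => σ.card = 3), ∑ w ∈ Δ.vertexSet,
          (if w ∈ ρ then 1 else 0) := Finset.sum_comm
    _ = 3 * (Δ.faces.filter fun σ => σ.card = 3).card := by
        rw [Finset.sum_congr rfl (fun ρ hρ => ?_), Finset.sum_const, smul_eq_mul, mul_comm]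
        obtain ⟨hρf, hρ3⟩ := Finset.mem_filter.1 hρ
        rw [← Finset.card_filter, Finset.filter_mem_eq_inter,
          Finset.inter_eq_right.2 (face_subset_vertexSet hρf), hρ3]

end StatementEight

/-- A flag 3-dimensional Eulerian complex on `n` vertices has at most
`⌊n²/4⌋ + n` edges. -/
theorem statement_8 {V : Type*} [DecidableEq V] (Δ : SC V) (n : ℕ)
    (hflag : Δ.IsFlag) (heul : Δ.IsEulerian 3) (hn : Δ.vertexSet.card = n) :
    Δ.fNum 1 ≤ n ^ 2 / 4 + n := by
  classical
  open StatementEight in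
  subst hn
  set n := Δ.vertexSet.card with hn
  set e := (Δ.faces.filter fun σ : Finset V => σ.card = 2).card with he
  set t2 := (Δ.faces.filter fun σ : Finset V => σ.card = 3).card with ht2
  set t3 := (Δ.faces.filter fun σ : Finset V => σ.card = 4).card with ht3
  have hfNum : Δ.fNum 1 = e := by
    rw [SC.fNum, he]
  rw [hfNum]
  -- main counting identity
  have hA : ∑ x ∈ Δ.vertexSet, (Nb Δ x).card * (Nb Δ x).card
      + ∑ w ∈ Δ.vertexSet, eT Δ w = n * e + 3 * t2 := by
    have h1 : ∑ w ∈ Δ.vertexSet, (∑ x ∈ Nb Δ w, (Nb Δ x).card + eT Δ w)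
        = ∑ w ∈ Δ.vertexSet, (e + eN Δ w) :=
      Finset.sum_congr rfl fun w hw => edge_decomp hw
    rw [Finset.sum_add_distrib, Finset.sum_add_distrib, sum_swap_deg, Finset.sum_const,
      smul_eq_mul, sum_eN hflag] at h1
    exact h1
  -- lower bound for the non-neighbourhood edge sums
  have hB : (n : ℤ) * (n - 2) - 2 * e ≤ ∑ w ∈ Δ.vertexSet, (eT Δ w : ℤ) := by
    have hper : ∀ w ∈ Δ.vertexSet, (n : ℤ) - 2 - (Nb Δ w).card ≤ (eT Δ w : ℤ) := by
      intro w hw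
      have hp := partition_card hw
      have hk := key_eT hflag heul hw
      rw [← hn] at hp
      have : ((Tt Δ w).card : ℤ) = (n : ℤ) - 1 - (Nb Δ w).card := by
        push_cast [hp]
        ring
      linarith
    calc (n : ℤ) * (n - 2) - 2 * e
        = ∑ w ∈ Δ.vertexSet, ((n : ℤ) - 2 - (Nb Δ w).card) := by
          rw [Finset.sum_sub_distrib, Finset.sum_const, ← hn, nsmul_eq_mul]
          have hdeg : ∑ w ∈ Δ.vertexSet, ((Nb Δ w).card : ℤ) = 2 * e := by
            rw [← Nat.cast_sum, sum_deg, ← he]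
            push_cast
            ring
          rw [hdeg]
      _ ≤ ∑ w ∈ Δ.vertexSet, (eT Δ w : ℤ) := Finset.sum_le_sum hper
  -- Cauchy-Schwarz
  have hCS : (2 * (e : ℤ)) ^ 2 ≤ (n : ℤ) * ∑ w ∈ Δ.vertexSet, ((Nb Δ w).card : ℤ) ^ 2 := by
    have := sq_sum_le_card_mul_sum_sq (s := Δ.vertexSet)
      (f := fun w => ((Nb Δ w).card : ℤ))
    have hdeg : ∑ w ∈ Δ.vertexSet, ((Nb Δ w).card : ℤ) = 2 * e := by
      rw [← Nat.cast_sum, sum_deg, ← he]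
      push_cast
      ring
    rw [hdeg, ← hn] at this
    exact this
  -- numerical facts
  have hEuler : e = n + t3 := edges_eq heul
  have ht3pos : 1 ≤ t3 := t3_pos heul
  have h23 : 2 * t2 = 4 * t3 := t2_eq_2t3 heul
  -- assemble over ℤ
  have hAZ : ∑ w ∈ Δ.vertexSet, ((Nb Δ w).card : ℤ) ^ 2
      + ∑ w ∈ Δ.vertexSet, (eT Δ w : ℤ) = (n : ℤ) * e + 3 * t2 := by
    have h0 := congrArg (Nat.cast : ℕ → ℤ) hA
    push_cast at h0
    simpa [pow_two] using h0
  have hfinal : 4 * (e : ℤ) ≤ (n : ℤ) ^ 2 + 4 * n := by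
    have hN : (0 : ℤ) ≤ (n : ℤ) := Int.natCast_nonneg n
    have hT2 : (2 : ℤ) * t2 = 4 * t3 := by exact_mod_cast h23
    have hE : (e : ℤ) = n + t3 := by exact_mod_cast hEuler
    have hT3 : (1 : ℤ) ≤ t3 := by exact_mod_cast ht3pos
    have hD2le : ∑ w ∈ Δ.vertexSet, ((Nb Δ w).card : ℤ) ^ 2
        ≤ (n : ℤ) * e + 3 * t2 - ((n : ℤ) * (n - 2) - 2 * e) := by
      linarith
    have hchain : 4 * (e : ℤ) ^ 2 ≤ (n : ℤ) * ((n + 8) * e - n ^ 2 - 4 * n) := by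
      have h1 : (2 * (e : ℤ)) ^ 2 ≤ (n : ℤ) * ((n : ℤ) * e + 3 * t2 - ((n : ℤ) * (n - 2) - 2 * e)) :=
        le_trans hCS (mul_le_mul_of_nonneg_left hD2le hN)
      have h2 : (n : ℤ) * ((n : ℤ) * e + 3 * t2 - ((n : ℤ) * (n - 2) - 2 * e))
          = (n : ℤ) * ((n + 8) * e - n ^ 2 - 4 * n) := by
        have : (3 : ℤ) * t2 = 6 * (e - n) := by linarith
        rw [this]
        ring
      calc 4 * (e : ℤ) ^ 2 = (2 * (e : ℤ)) ^ 2 := by ring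
        _ ≤ _ := h1
        _ = _ := h2
    have hfact : (4 * (e : ℤ) - n ^ 2 - 4 * n) * ((e : ℤ) - n) ≤ 0 := by nlinarith
    have hEn : (1 : ℤ) ≤ (e : ℤ) - n := by linarith
    nlinarith [hfact, hEn]
  have hfinalN : 4 * e ≤ n ^ 2 + 4 * n := by exact_mod_cast hfinal
  obtain ⟨m, hm⟩ : ∃ m, n ^ 2 = m := ⟨n ^ 2, rfl⟩
  rw [hm] at hfinalN ⊢
  omega
end
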